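/- For every $\theta \in (-\pi, \pi]$, $\left|\frac{\sinh(e^{i\theta/2})}{\cosh^2(e^{i\theta/2})}\right| \ge \frac{\sinh 1}{\cosh^2 1}$. -/

import Mathlib

open Real Set

set_option maxHeartbeats 1000000

private lemma aux_exp_ge (x : ℝ) : Real.exp 1 * x ≤ Real.exp x := by
  have h := Real.add_one_le_exp (x - 1)
  have h2 : Real.exp x = Real.exp 1 * Real.exp (x - 1) := by
    rw [← Real.exp_add]; ring_nf
  nlinarith [Real.exp_pos 1]

private lemma aux_exp_neg_le {x : ℝ} (h0 : 0 ≤ x) (h1 : x ≤ 1) :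
    Real.exp (-x) ≤ 1 - x + x * Real.exp (-1) := by
  have := convexOn_exp.2 (Set.mem_univ (0:ℝ)) (Set.mem_univ (-1:ℝ))
    (by linarith : (0:ℝ) ≤ 1 - x) h0 (by ring)
  simpa [smul_eq_mul, Real.exp_zero] using this

private lemma aux_sin_ge {y : ℝ} (h0 : 0 ≤ y) (h1 : y ≤ 1) :
    y * Real.sin 1 ≤ Real.sin y := by
  have hπ : (1:ℝ) ≤ π := by linarith [Real.pi_gt_three]
  have := strictConcaveOn_sin_Icc.concaveOn.2 (x := 0) (y := 1)
    ⟨le_refl 0, Real.pi_nonneg⟩ ⟨zero_le_one, hπ⟩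
    (by linarith : (0:ℝ) ≤ 1 - y) h0 (by ring)
  simpa [smul_eq_mul, Real.sin_zero] using this


private lemma aux_poly {x S s1 C K : ℝ} (hx0 : 0 ≤ x) (hx1 : x ≤ 1)
    (hS0 : 0 ≤ S) (htan : s1 - C * (1 - x) ≤ S)
    (hs1a : 1.17520 < s1) (hs1b : s1 < 1.1752015)
    (hCa : 1.6752 < C) (hCb : C < 1.6752015)
    (hK : 2.0901 ≤ K) : s1 ^ 2 ≤ S ^ 2 + K * (1 - x ^ 2) := by
  have hu0 : (0:ℝ) ≤ 1 - x := by linarith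
  have hu1 : (1:ℝ) - x ≤ 1 := by linarith
  have hxx : 1 - x ≤ 1 - x ^ 2 := by nlinarith [mul_nonneg hx0 hu0]
  have hs1sq : s1 ^ 2 < 1.3811 := by nlinarith [sq_nonneg (s1 - 1.1752015)]
  rcases le_or_gt s1 (C * (1 - x)) with hcase | hcase
  · -- tangent nonpositive : x is small
    have h1 : (0.7015:ℝ) < 1 - x := by nlinarith [mul_nonneg (by linarith : (0:ℝ) ≤ 1.6752015 - C) hu0]
    have h2 : (1.4662:ℝ) ≤ K * (1 - x) := by
      nlinarith [mul_nonneg (by linarith : (0:ℝ) ≤ K - 2.0901) (by linarith : (0:ℝ) ≤ 1 - x - 0.7015)]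
    have h3 : K * (1 - x) ≤ K * (1 - x ^ 2) :=
      mul_le_mul_of_nonneg_left hxx (by linarith)
    nlinarith [sq_nonneg S]
  · -- tangent positive
    have hT0 : 0 < s1 - C * (1 - x) := by linarith
    have hS2 : (s1 - C * (1 - x)) ^ 2 ≤ S ^ 2 := by nlinarith
    have hsC : s1 * C ≤ 1.1752015 * 1.6752015 :=
      mul_le_mul hs1b.le hCb.le (by linarith) (by norm_num)
    have hC2 : (1.6752:ℝ) ^ 2 ≤ C ^ 2 := by nlinarith
    have hbr : 0 ≤ (C ^ 2 - K) * (1 - x) + 2 * (K - s1 * C) := by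
      rcases le_or_gt (C ^ 2) K with h | h
      · nlinarith [mul_nonneg (by linarith : (0:ℝ) ≤ K - C ^ 2)
          (by linarith : (0:ℝ) ≤ 1 - (1 - x))]
      · nlinarith [mul_nonneg (by linarith : (0:ℝ) ≤ C ^ 2 - K) hu0]
    nlinarith [hS2, mul_nonneg hu0 hbr]

private lemma aux_key {x y : ℝ} (hx0 : 0 ≤ x) (hx1 : x ≤ 1) (hxy : x ^ 2 + y ^ 2 = 1) :
    Real.sinh 1 ^ 2 ≤ Real.sinh x ^ 2 + (Real.cosh 1 ^ 2 + Real.sinh 1 ^ 2) * Real.sin y ^ 2 := by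
  have hE1 : 2.718281 < Real.exp 1 := by
    have := Real.exp_one_gt_d9; norm_num at this ⊢; linarith
  have hE2 : Real.exp 1 < 2.718282 := by
    have := Real.exp_one_lt_d9; norm_num at this ⊢; linarith
  have hIpos : 0 < Real.exp (-1) := Real.exp_pos _
  have hEI : Real.exp 1 * Real.exp (-1) = 1 := by rw [← Real.exp_add]; norm_num
  have hI1 : 0.367879 < Real.exp (-1) := by
    nlinarith [mul_lt_mul_of_pos_left hE2 hIpos]
  have hI2 : Real.exp (-1) < 0.3678796 := by
    nlinarith [mul_lt_mul_of_pos_left hE1 hIpos]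
  -- sin y ^ 2 ≥ (1 - x^2) * (5/9)
  have hy1 : |y| ≤ 1 := by
    have h : y ^ 2 ≤ 1 := by nlinarith
    rw [abs_le]; constructor <;> nlinarith [abs_nonneg y, sq_abs y]
  have hsin1 : 0 ≤ Real.sin 1 := Real.sin_nonneg_of_nonneg_of_le_pi zero_le_one
    (by linarith [Real.pi_gt_three])
  have hsy : |y| * Real.sin 1 ≤ Real.sin |y| := aux_sin_ge (abs_nonneg y) hy1
  have hsyy : Real.sin |y| ^ 2 = Real.sin y ^ 2 := by
    rcases abs_cases y with ⟨h, _⟩ | ⟨h, _⟩ <;> rw [h] <;> simp [Real.sin_neg]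
  have hsin1sq : (5:ℝ)/9 ≤ Real.sin 1 ^ 2 := by
    have h1 := Real.cos_one_le
    have h2 := Real.cos_one_pos
    have h3 := Real.sin_sq_add_cos_sq 1
    nlinarith
  have hQ : (1 - x ^ 2) * (5 / 9) ≤ Real.sin y ^ 2 := by
    have h0 : (|y| * Real.sin 1) ^ 2 ≤ Real.sin |y| ^ 2 := by
      nlinarith [mul_nonneg (abs_nonneg y) hsin1]
    have h1 : y ^ 2 * Real.sin 1 ^ 2 ≤ Real.sin y ^ 2 := by
      rw [← hsyy]
      calc y ^ 2 * Real.sin 1 ^ 2 = (|y| * Real.sin 1) ^ 2 := by rw [mul_pow, sq_abs]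
        _ ≤ _ := h0
    nlinarith [sq_nonneg y, mul_le_mul_of_nonneg_left hsin1sq (sq_nonneg y)]
  -- constants
  have hs1 : Real.sinh 1 = (Real.exp 1 - Real.exp (-1)) / 2 := Real.sinh_eq 1
  have hc1 : Real.cosh 1 = (Real.exp 1 + Real.exp (-1)) / 2 := Real.cosh_eq 1
  have hs1a : 1.17520 < Real.sinh 1 := by rw [hs1]; linarith
  have hs1b : Real.sinh 1 < 1.1752015 := by rw [hs1]; linarith
  have hCa : (1.6752:ℝ) < (Real.exp 1 + 1 - Real.exp (-1)) / 2 := by linarith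
  have hCb : (Real.exp 1 + 1 - Real.exp (-1)) / 2 < 1.6752015 := by linarith
  have hEsq : (7.389051 : ℝ) < Real.exp 1 ^ 2 := by nlinarith [sq_nonneg (Real.exp 1 - 2.718281)]
  have hIsq : (0.135335 : ℝ) < Real.exp (-1) ^ 2 := by nlinarith [sq_nonneg (Real.exp (-1) - 0.367879)]
  have hK : (2.0901:ℝ) ≤ (Real.cosh 1 ^ 2 + Real.sinh 1 ^ 2) * (5 / 9) := by
    have : (3.76219:ℝ) ≤ Real.cosh 1 ^ 2 + Real.sinh 1 ^ 2 := by
      rw [hs1, hc1]; ring_nf; nlinarith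
    linarith
  -- tangent bound
  have htan : Real.sinh 1 - ((Real.exp 1 + 1 - Real.exp (-1)) / 2) * (1 - x) ≤ Real.sinh x := by
    have h1 := aux_exp_ge x
    have h2 := aux_exp_neg_le hx0 hx1
    rw [hs1, Real.sinh_eq x]; linarith
  have hS0 : 0 ≤ Real.sinh x := Real.sinh_nonneg_iff.2 hx0
  have main := aux_poly hx0 hx1 hS0 htan hs1a hs1b hCa hCb hK
  have hKpos : (0:ℝ) ≤ Real.cosh 1 ^ 2 + Real.sinh 1 ^ 2 := by positivity
  calc Real.sinh 1 ^ 2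
      ≤ Real.sinh x ^ 2 + (Real.cosh 1 ^ 2 + Real.sinh 1 ^ 2) * (5 / 9) * (1 - x ^ 2) := main
    _ ≤ _ := by nlinarith [mul_le_mul_of_nonneg_left hQ hKpos]

theorem sinh_div_cosh_sq_boundary_bound :
    ∀ θ ∈ Ioc (-π) π,
      Real.sinh 1 / Real.cosh 1 ^ 2 ≤
        ‖Complex.sinh (Complex.exp ((θ / 2 : ℂ) * Complex.I)) /
          Complex.cosh (Complex.exp ((θ / 2 : ℂ) * Complex.I)) ^ 2‖ := by
  intro θ hθ
  obtain ⟨hθ1, hθ2⟩ := hθ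
  set t : ℝ := θ / 2 with htdef
  set x : ℝ := Real.cos t with hxdef
  set y : ℝ := Real.sin t with hydef
  have hπ : (3:ℝ) < π := Real.pi_gt_three
  have ht1 : -(π/2) < t := by rw [htdef]; linarith
  have ht2 : t ≤ π/2 := by rw [htdef]; linarith
  have hz : Complex.exp ((θ / 2 : ℂ) * Complex.I) = (x : ℂ) + (y : ℂ) * Complex.I := by
    have hcast : ((θ : ℂ) / 2) * Complex.I = (t : ℂ) * Complex.I := by
      rw [htdef]; push_cast; ring
    rw [hcast, Complex.exp_mul_I, Complex.ofReal_cos, Complex.ofReal_sin]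
  have hsinh : Complex.sinh ((x:ℂ) + (y:ℂ) * Complex.I)
      = ((Real.sinh x * Real.cos y : ℝ) : ℂ)
        + ((Real.cosh x * Real.sin y : ℝ) : ℂ) * Complex.I := by
    rw [Complex.sinh_add, Complex.sinh_mul_I, Complex.cosh_mul_I]
    push_cast
    ring
  have hcosh : Complex.cosh ((x:ℂ) + (y:ℂ) * Complex.I)
      = ((Real.cosh x * Real.cos y : ℝ) : ℂ)
        + ((Real.sinh x * Real.sin y : ℝ) : ℂ) * Complex.I := by
    rw [Complex.cosh_add, Complex.sinh_mul_I, Complex.cosh_mul_I]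
    push_cast
    ring
  set A2 : ℝ := (Real.sinh x * Real.cos y) ^ 2 + (Real.cosh x * Real.sin y) ^ 2 with hA2def
  set B2 : ℝ := (Real.cosh x * Real.cos y) ^ 2 + (Real.sinh x * Real.sin y) ^ 2 with hB2def
  have hnorm : ‖Complex.sinh (Complex.exp ((θ / 2 : ℂ) * Complex.I)) /
      Complex.cosh (Complex.exp ((θ / 2 : ℂ) * Complex.I)) ^ 2‖
      = Real.sqrt A2 / Real.sqrt B2 ^ 2 := by
    rw [norm_div, norm_pow, hz, hsinh, hcosh,
      Complex.norm_add_mul_I, Complex.norm_add_mul_I]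
  rw [hnorm]
  -- basic facts
  have hx0 : 0 ≤ x := Real.cos_nonneg_of_mem_Icc ⟨by linarith, ht2⟩
  have hx1 : x ≤ 1 := Real.cos_le_one t
  have hxy : x ^ 2 + y ^ 2 = 1 := by
    rw [hxdef, hydef, add_comm]; exact Real.sin_sq_add_cos_sq t
  have hy1 : -1 ≤ y := Real.neg_one_le_sin t
  have hy2 : y ≤ 1 := Real.sin_le_one t
  have hcosy : 0 < Real.cos y := Real.cos_pos_of_mem_Ioo ⟨by linarith, by linarith⟩
  have hcoshx : 1 ≤ Real.cosh x := Real.one_le_cosh x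
  have hB2pos : 0 < B2 := by
    have h1 : 0 < (Real.cosh x * Real.cos y) ^ 2 := by positivity
    have h2 : 0 ≤ (Real.sinh x * Real.sin y) ^ 2 := sq_nonneg _
    rw [hB2def]; linarith
  have hA2nonneg : 0 ≤ A2 := by positivity
  rw [Real.sq_sqrt hB2pos.le]
  -- identities
  have hpyth : Real.sin y ^ 2 + Real.cos y ^ 2 = 1 := Real.sin_sq_add_cos_sq y
  have hcsq : Real.cosh x ^ 2 = Real.sinh x ^ 2 + 1 := by
    have := Real.cosh_sq x; linarith
  have hc1sq : Real.cosh 1 ^ 2 = Real.sinh 1 ^ 2 + 1 := by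
    have := Real.cosh_sq 1; linarith
  have hA : A2 = Real.sinh x ^ 2 + Real.sin y ^ 2 := by rw [hA2def]; nlinarith [hpyth, hcsq]
  have hB : B2 = Real.sinh x ^ 2 + Real.cos y ^ 2 := by rw [hB2def]; nlinarith [hpyth, hcsq]
  have key := aux_key hx0 hx1 hxy
  have hshx : Real.sinh x ≤ Real.sinh 1 := by
    rw [Real.sinh_le_sinh]; exact hx1
  have hshx0 : 0 ≤ Real.sinh x := Real.sinh_nonneg_iff.2 hx0
  have hcos2y : Real.cos y ^ 2 ≤ 1 := by nlinarith [sq_nonneg (Real.sin y)]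
  have hBle : B2 ≤ Real.cosh 1 ^ 2 := by
    rw [hB, hc1sq]; nlinarith
  have hc1A : Real.sinh 1 ^ 2 * B2 ≤ Real.cosh 1 ^ 2 * A2 := by
    rw [hA, hB, hc1sq]; nlinarith [key, hc1sq]
  -- conclude
  have hs1pos : 0 < Real.sinh 1 := by
    have : (0:ℝ) < 1.17520 := by norm_num
    nlinarith [Real.sinh_lt_sinh.2 (by norm_num : (0:ℝ) < 1), Real.sinh_zero]
  have hc1pos : 0 < Real.cosh 1 := Real.cosh_pos 1
  have hmain : Real.sinh 1 * B2 ≤ Real.sqrt A2 * Real.cosh 1 ^ 2 := by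
    have h1 : (Real.sinh 1 * B2) ^ 2 ≤ A2 * (Real.cosh 1 ^ 2) ^ 2 := by
      have e1 : Real.sinh 1 ^ 2 * B2 * B2 ≤ Real.sinh 1 ^ 2 * B2 * Real.cosh 1 ^ 2 :=
        mul_le_mul_of_nonneg_left hBle (by positivity)
      have e2 : Real.sinh 1 ^ 2 * B2 * Real.cosh 1 ^ 2
          ≤ Real.cosh 1 ^ 2 * A2 * Real.cosh 1 ^ 2 :=
        mul_le_mul_of_nonneg_right hc1A (by positivity)
      calc (Real.sinh 1 * B2) ^ 2 = Real.sinh 1 ^ 2 * B2 * B2 := by ring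
        _ ≤ Real.sinh 1 ^ 2 * B2 * Real.cosh 1 ^ 2 := e1
        _ ≤ Real.cosh 1 ^ 2 * A2 * Real.cosh 1 ^ 2 := e2
        _ = A2 * (Real.cosh 1 ^ 2) ^ 2 := by ring
    calc Real.sinh 1 * B2 = Real.sqrt ((Real.sinh 1 * B2) ^ 2) :=
          (Real.sqrt_sq (by positivity)).symm
      _ ≤ Real.sqrt (A2 * (Real.cosh 1 ^ 2) ^ 2) := Real.sqrt_le_sqrt h1
      _ = Real.sqrt A2 * Real.cosh 1 ^ 2 := by
          rw [Real.sqrt_mul hA2nonneg, Real.sqrt_sq (by positivity)]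
  rw [div_le_div_iff₀ (by positivity) hB2pos]
  linarith
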